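/- Let M be a matroid on ground set W with n agents having additive utilities u_{ij} ∈ [0,1], and let c* be a basis of M maximizing F(c) = Σ_i ln(1 + u_i(c)) over all bases. Then c* is a (0,2)-core outcome: there is no subset S of agents and basis c' such that (|S|/n)·u_i(c') ≥ u_i(c*) + 2 for all i ∈ S with at least one strict inequality. -/

import Mathlib

private lemma log_ge_aux {a b : ℝ} (ha : 0 < a) (hb : 0 < b) :
    (b - a) / b ≤ Real.log b - Real.log a := by
  have h := Real.log_le_sub_one_of_pos (div_pos ha hb)
  rw [Real.log_div ha.ne' hb.ne'] at h
  have h2 : (b - a) / b = 1 - a / b := by field_simp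
  linarith

private lemma swap_log_bound {d p q : ℝ} (hd : 1 ≤ d) (hp0 : 0 ≤ p) (hp1 : p ≤ 1)
    (hq0 : 0 ≤ q) (hq : q ≤ d - 1) :
    p / (1 + d) - q / (d - q) ≤ Real.log (d - q + p) - Real.log d := by
  have h2 : 0 < d - q := by linarith
  have h3 : 0 < d - q + p := by linarith
  have hA := log_ge_aux h2 h3
  have e1 : (d - q + p - (d - q)) / (d - q + p) = p / (d - q + p) := by ring_nf
  rw [e1] at hA
  have hB := log_ge_aux (by linarith : (0:ℝ) < d) h2
  have e2 : (d - q - d) / (d - q) = -(q / (d - q)) := by ring_nf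
  rw [e2] at hB
  have hp : p / (1 + d) ≤ p / (d - q + p) := by
    apply div_le_div_of_nonneg_left hp0 h3
    linarith
  linarith

private lemma matroid_card_le {α : Type*} {M : Matroid α}
    {A B : Finset α} (hA : M.Indep (A : Set α)) (hB : M.Indep (B : Set α))
    (h : (A : Set α) ⊆ M.closure (B : Set α)) : A.card ≤ B.card := by
  by_contra hlt
  push_neg at hlt
  have henc : (B : Set α).encard < (A : Set α).encard := by
    rw [Set.encard_coe_eq_coe_finsetCard, Set.encard_coe_eq_coe_finsetCard]
    exact_mod_cast hlt
  obtain ⟨x, hx, hxI⟩ := hB.augment hA henc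
  exact (hB.insert_dep_iff.2 ⟨h hx.1, hx.2⟩).not_indep hxI

private lemma exists_exchange_fn {α : Type*} [DecidableEq α] {M : Matroid α}
    {B C : Finset α} (hB : M.IsBase (B : Set α)) (hC : M.IsBase (C : Set α)) :
    ∃ π : α → α, Set.InjOn π (C : Set α) ∧ (∀ j ∈ C, π j ∈ B) ∧
      (∀ j ∈ C, j ∈ B → π j = j) ∧
      (∀ j ∈ C, M.IsBase (insert j ((B : Set α) \ {π j}))) := by
  classical
  set N : α → Finset α := fun j => B.filter (fun e => j ∉ M.closure ((B : Set α) \ {e}))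
    with hNdef
  have hNB : ∀ j, N j ⊆ B := fun j => Finset.filter_subset _ _
  -- exchange produces a base
  have hbase : ∀ j ∈ C, j ∉ B → ∀ e ∈ N j, M.IsBase (insert j ((B : Set α) \ {e})) := by
    intro j hjC hjB e heN
    rw [hNdef, Finset.mem_filter] at heN
    obtain ⟨heB, hjcl⟩ := heN
    have hjE : j ∈ M.E := hC.subset_ground hjC
    have hindep : M.Indep (insert j ((B : Set α) \ {e})) := by
      rw [Matroid.insert_indep_iff]
      refine ⟨hB.indep.subset Set.diff_subset, fun _ => ⟨hjE, hjcl⟩⟩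
    have hne : j ≠ e := fun h => hjB (h ▸ heB)
    rw [Set.insert_diff_singleton_comm hne] at hindep ⊢
    exact hB.exchange_isBase_of_indep' heB hjB hindep
  -- closure claim
  have hclos : ∀ j ∈ C, j ∉ B → j ∈ M.closure ((N j : Finset α) : Set α) := by
    intro j hjC hjB
    have hjE : j ∈ M.E := hC.subset_ground hjC
    have hjB' : j ∈ M.closure (B : Set α) := by rw [hB.closure_eq]; exact hjE
    set P := B.powerset.filter (fun I => j ∈ M.closure ((I : Finset α) : Set α)) with hPdef
    have hBP : B ∈ P := by
      rw [hPdef, Finset.mem_filter]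
      exact ⟨Finset.mem_powerset_self B, hjB'⟩
    obtain ⟨I, hIP, hmin⟩ := P.exists_min_image Finset.card ⟨B, hBP⟩
    rw [hPdef, Finset.mem_filter, Finset.mem_powerset] at hIP
    obtain ⟨hIB, hjI⟩ := hIP
    have hIN : I ⊆ N j := by
      intro e heI
      rw [hNdef, Finset.mem_filter]
      refine ⟨hIB heI, fun hjcl => ?_⟩
      -- minimality: j ∉ closure (I.erase e)
      have hjer : j ∉ M.closure ((I.erase e : Finset α) : Set α) := by
        intro hmem
        have hmemP : I.erase e ∈ P := by
          rw [hPdef, Finset.mem_filter, Finset.mem_powerset]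
          exact ⟨(Finset.erase_subset e I).trans hIB, hmem⟩
        have := hmin _ hmemP
        have hlt : (I.erase e).card < I.card := Finset.card_erase_lt_of_mem heI
        omega
      rw [Finset.coe_erase] at hjer
      have h1 : j ∈ M.closure (insert e ((I : Set α) \ {e})) \ M.closure ((I : Set α) \ {e}) := by
        rw [Set.insert_diff_singleton, Set.insert_eq_of_mem (by exact_mod_cast heI)]
        exact ⟨hjI, hjer⟩
      have h2 := (Matroid.closure_exchange h1).1
      have h3 : e ∈ M.closure (insert j ((B : Set α) \ {e})) := by
        refine M.closure_subset_closure ?_ h2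
        exact Set.insert_subset_insert (Set.diff_subset_diff_left (by exact_mod_cast hIB))
      rw [Matroid.closure_insert_eq_of_mem_closure hjcl] at h3
      exact hB.indep.notMem_closure_sdiff_of_mem (by exact_mod_cast hIB heI) h3
    exact M.closure_subset_closure (by exact_mod_cast hIN) hjI
  -- Hall condition
  have hall : ∀ s : Finset {x : α // x ∈ C \ B},
      s.card ≤ (s.biUnion (fun j => N j.1 \ C)).card := by
    intro s
    set A := s.image Subtype.val with hAdef
    have hcardA : A.card = s.card := Finset.card_image_of_injective _ Subtype.val_injective
    have hbU : s.biUnion (fun j => N j.1 \ C) = A.biUnion (fun j => N j \ C) := by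
      ext e
      simp only [Finset.mem_biUnion, Finset.mem_image, hAdef]
      constructor
      · rintro ⟨j, hj, h⟩; exact ⟨j.1, ⟨j, hj, rfl⟩, h⟩
      · rintro ⟨a, ⟨j, hj, rfl⟩, h⟩; exact ⟨j, hj, h⟩
    have hACB : ∀ j ∈ A, j ∈ C ∧ j ∉ B := by
      intro j hj
      rw [hAdef, Finset.mem_image] at hj
      obtain ⟨⟨x, hx⟩, _, rfl⟩ := hj
      exact Finset.mem_sdiff.1 hx
    set X := (A.biUnion N) ∩ C with hXdef
    set Y := A.biUnion (fun j => N j \ C) with hYdef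
    have hUB : A.biUnion N ⊆ B := Finset.biUnion_subset.2 fun j _ => hNB j
    have hXY : X ∪ Y = A.biUnion N := by
      ext e
      simp only [hXdef, hYdef, Finset.mem_union, Finset.mem_inter, Finset.mem_biUnion,
        Finset.mem_sdiff]
      constructor
      · rintro (⟨⟨a, ha, h⟩, _⟩ | ⟨a, ha, h, _⟩) <;> exact ⟨a, ha, h⟩
      · rintro ⟨a, ha, h⟩
        by_cases heC : e ∈ C
        · exact Or.inl ⟨⟨a, ha, h⟩, heC⟩
        · exact Or.inr ⟨a, ha, h, heC⟩
    have hdisjAX : Disjoint A X := by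
      rw [Finset.disjoint_left]
      intro a haA haX
      exact (hACB a haA).2 (hUB (Finset.mem_inter.1 haX).1)
    have hdisjXY : Disjoint X Y := by
      rw [Finset.disjoint_left]
      intro a haX haY
      rw [hYdef, Finset.mem_biUnion] at haY
      obtain ⟨j, _, hj⟩ := haY
      exact (Finset.mem_sdiff.1 hj).2 (Finset.mem_inter.1 haX).2
    have hAXsub : ((A ∪ X : Finset α) : Set α) ⊆ (C : Set α) := by
      intro x hx
      rw [Finset.coe_union, Set.mem_union] at hx
      rcases hx with h | h
      · exact_mod_cast (hACB x (by exact_mod_cast h)).1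
      · exact_mod_cast (Finset.mem_inter.1 (by exact_mod_cast h)).2
    have hXYsub : ((X ∪ Y : Finset α) : Set α) ⊆ (B : Set α) := by
      rw [hXY]; exact_mod_cast hUB
    have hcard := matroid_card_le (hC.indep.subset hAXsub) (hB.indep.subset hXYsub) ?_
    · rw [Finset.card_union_of_disjoint hdisjAX, Finset.card_union_of_disjoint hdisjXY] at hcard
      rw [hbU, ← hcardA]
      omega
    -- A ∪ X ⊆ closure (X ∪ Y)
    intro x hx
    rw [Finset.coe_union, Set.mem_union] at hx
    rw [hXY]
    rcases hx with h | h
    · have hxA : x ∈ A := by exact_mod_cast h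
      refine M.closure_subset_closure ?_ (hclos x (hACB x hxA).1 (hACB x hxA).2)
      exact_mod_cast Finset.subset_biUnion_of_mem N hxA
    · have hxX : x ∈ X := by exact_mod_cast h
      have hx2 : x ∈ A.biUnion N := (Finset.mem_inter.1 hxX).1
      exact M.subset_closure _ ((Finset.coe_subset.2 hUB).trans hB.subset_ground)
        (by exact_mod_cast hx2)
  obtain ⟨f, hfinj, hf⟩ := (Finset.all_card_le_biUnion_card_iff_exists_injective
    (fun j : {x : α // x ∈ C \ B} => N j.1 \ C)).1 hall
  set π : α → α := fun j => if h : j ∈ C \ B then f ⟨j, h⟩ else j with hπdef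
  have hπ1 : ∀ j ∈ C, j ∉ B → π j ∈ N j \ C := by
    intro j hjC hjB
    have h : j ∈ C \ B := Finset.mem_sdiff.2 ⟨hjC, hjB⟩
    rw [hπdef]; simp only [h, dif_pos]
    exact hf _
  have hπ2 : ∀ j ∈ C, j ∈ B → π j = j := by
    intro j _ hjB
    rw [hπdef]; simp only [Finset.mem_sdiff, hjB, not_true, and_false, dif_neg, not_false_iff]
  refine ⟨π, ?_, ?_, hπ2, ?_⟩
  · intro j1 hj1 j2 hj2 heq
    have hj1C : j1 ∈ C := by exact_mod_cast hj1
    have hj2C : j2 ∈ C := by exact_mod_cast hj2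
    by_cases h1 : j1 ∈ B <;> by_cases h2 : j2 ∈ B
    · rw [hπ2 j1 hj1C h1, hπ2 j2 hj2C h2] at heq; exact heq
    · exfalso
      rw [hπ2 j1 hj1C h1] at heq
      have := Finset.mem_sdiff.1 (hπ1 j2 hj2C h2)
      rw [← heq] at this
      exact this.2 hj1C
    · exfalso
      rw [hπ2 j2 hj2C h2] at heq
      have := Finset.mem_sdiff.1 (hπ1 j1 hj1C h1)
      rw [heq] at this
      exact this.2 hj2C
    · have m1 : j1 ∈ C \ B := Finset.mem_sdiff.2 ⟨hj1C, h1⟩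
      have m2 : j2 ∈ C \ B := Finset.mem_sdiff.2 ⟨hj2C, h2⟩
      rw [hπdef] at heq
      simp only [m1, m2, dif_pos] at heq
      have := hfinj heq
      exact congrArg Subtype.val this
  · intro j hjC
    by_cases h : j ∈ B
    · rw [hπ2 j hjC h]; exact h
    · exact hNB j (Finset.mem_sdiff.1 (hπ1 j hjC h)).1
  · intro j hjC
    by_cases h : j ∈ B
    · rw [hπ2 j hjC h, Set.insert_diff_singleton, Set.insert_eq_of_mem (by exact_mod_cast h)]
      exact hB
    · exact hbase j hjC h _ (Finset.mem_sdiff.1 (hπ1 j hjC h)).1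


/-- Under matroid constraints, a basis maximizing the smooth Nash welfare objective
`F(c) = ∑ i, ln(1 + u_i(c))` (with `u_{ij} ∈ [0,1]`) is a `(0,2)`-core outcome. -/
theorem matroid_smooth_nash_is_02_core
    {α : Type*} [DecidableEq α] {n : ℕ} (M : Matroid α)
    (u : Fin n → α → ℝ) (hu : ∀ i j, u i j ∈ Set.Icc (0 : ℝ) 1)
    (cstar : Finset α) (hcstar : M.IsBase (cstar : Set α))
    (hmax : ∀ c : Finset α, M.IsBase (c : Set α) →
      ∑ i, Real.log (1 + ∑ j ∈ c, u i j) ≤ ∑ i, Real.log (1 + ∑ j ∈ cstar, u i j)) :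
    ¬ ∃ (S : Finset (Fin n)) (c' : Finset α), M.IsBase (c' : Set α) ∧
        (∀ i ∈ S, ((S.card : ℝ) / n) * (∑ j ∈ c', u i j) ≥ (∑ j ∈ cstar, u i j) + 2) ∧
        (∃ i ∈ S, ((S.card : ℝ) / n) * (∑ j ∈ c', u i j) > (∑ j ∈ cstar, u i j) + 2) := by
  classical
  rintro ⟨S, c', hc', hge, i0, hi0S, hstrict⟩
  set d : Fin n → ℝ := fun i => 1 + ∑ j ∈ cstar, u i j with hd
  have hdi : ∀ i, d i = 1 + ∑ j ∈ cstar, u i j := fun i => by rw [hd]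
  have hd1 : ∀ i, 1 ≤ d i := by
    intro i
    have : 0 ≤ ∑ j ∈ cstar, u i j := Finset.sum_nonneg fun j _ => (hu i j).1
    rw [hdi i]; linarith
  have hqle : ∀ i, ∀ e ∈ cstar, u i e ≤ d i - 1 := by
    intro i e he
    have h := Finset.single_le_sum (f := u i) (fun j _ => (hu i j).1) he
    rw [hdi i]; linarith
  have hmaxd : ∀ c : Finset α, M.IsBase (c : Set α) →
      ∑ i, Real.log (1 + ∑ j ∈ c, u i j) ≤ ∑ i, Real.log (d i) := by
    intro c hc
    refine (hmax c hc).trans_eq (Finset.sum_congr rfl fun i _ => by rw [hdi i])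
  obtain ⟨π, hπinj, hπmem, hπfix, hπbase⟩ := exists_exchange_fn hcstar hc'
  -- Step 1: each swap does not increase the objective
  have key1 : ∀ j ∈ c',
      ∑ i, (u i j / (1 + d i) - u i (π j) / (d i - u i (π j))) ≤ 0 := by
    intro j hj
    by_cases hjB : j ∈ cstar
    · -- trivial swap: each term is nonpositive
      rw [hπfix j hj hjB]
      refine Finset.sum_nonpos fun i _ => ?_
      have hq := hqle i j hjB
      have h1 : u i j / (1 + d i) ≤ u i j / (d i - u i j) := by
        apply div_le_div_of_nonneg_left (hu i j).1
        · linarith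
        · linarith [(hu i j).1]
      linarith
    · set e := π j with he
      have heB : e ∈ cstar := hπmem j hj
      set F : Finset α := insert j (cstar.erase e) with hF
      have hFcoe : (F : Set α) = insert j ((cstar : Set α) \ {e}) := by
        rw [hF, Finset.coe_insert, Finset.coe_erase]
      have hFb : M.IsBase (F : Set α) := by rw [hFcoe]; exact hπbase j hj
      have hsumF : ∀ i, (1 : ℝ) + ∑ x ∈ F, u i x = d i - u i e + u i j := by
        intro i
        rw [hF, Finset.sum_insert (fun h => hjB (Finset.mem_of_mem_erase h)),
          Finset.sum_erase_eq_sub heB, hdi i]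
        ring
      have hcalc : ∑ i, (u i j / (1 + d i) - u i (π j) / (d i - u i (π j)))
          ≤ ∑ i, (Real.log (1 + ∑ x ∈ F, u i x) - Real.log (d i)) := by
        refine Finset.sum_le_sum fun i _ => ?_
        rw [hsumF i, ← he]
        exact swap_log_bound (hd1 i) (hu i j).1 (hu i j).2 (hu i e).1 (hqle i e heB)
      refine hcalc.trans ?_
      rw [Finset.sum_sub_distrib]
      linarith [hmaxd F hFb]
  -- Step 2: by injectivity, the removed-utility terms sum to at most 1 per agent
  have key2 : ∀ i, ∑ j ∈ c', u i (π j) / (d i - u i (π j)) ≤ 1 := by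
    intro i
    have himg : ∑ x ∈ c'.image π, u i x / (d i - u i x)
        = ∑ j ∈ c', u i (π j) / (d i - u i (π j)) := by
      refine Finset.sum_image fun x hx y hy h =>
        hπinj (by exact_mod_cast hx) (by exact_mod_cast hy) h
    have hsub : c'.image π ⊆ cstar := by
      intro x hx
      obtain ⟨j, hj, rfl⟩ := Finset.mem_image.1 hx
      exact hπmem j hj
    have hnn : ∀ x ∈ cstar, 0 ≤ u i x / (d i - u i x) := by
      intro x hx
      have := hqle i x hx
      exact div_nonneg (hu i x).1 (by linarith [hd1 i])
    have h1 : ∑ j ∈ c', u i (π j) / (d i - u i (π j)) ≤ ∑ x ∈ cstar, u i x / (d i - u i x) := by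
      rw [← himg]
      exact Finset.sum_le_sum_of_subset_of_nonneg hsub fun x hx _ => hnn x hx
    have h2 : ∑ x ∈ cstar, u i x / (d i - u i x) ≤ 1 := by
      by_cases hz : ∑ x ∈ cstar, u i x = 0
      · have hzero := (Finset.sum_eq_zero_iff_of_nonneg fun x _ => (hu i x).1).1 hz
        have : ∀ x ∈ cstar, u i x / (d i - u i x) = 0 := fun x hx => by
          rw [hzero x hx, zero_div]
        rw [Finset.sum_congr rfl this, Finset.sum_const, smul_zero]
        norm_num
      · have hpos : 0 < ∑ x ∈ cstar, u i x :=
          lt_of_le_of_ne (Finset.sum_nonneg fun x _ => (hu i x).1) (Ne.symm hz)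
        have hdpos : 0 < d i - 1 := by rw [hdi i]; linarith
        calc ∑ x ∈ cstar, u i x / (d i - u i x)
            ≤ ∑ x ∈ cstar, u i x / (d i - 1) := by
              refine Finset.sum_le_sum fun x hx => ?_
              apply div_le_div_of_nonneg_left (hu i x).1 hdpos
              linarith [(hu i x).2]
          _ = (∑ x ∈ cstar, u i x) / (d i - 1) := by rw [Finset.sum_div]
          _ = 1 := by
              rw [show d i - 1 = ∑ x ∈ cstar, u i x from by rw [hdi i]; ring]
              exact div_self hpos.ne'
    exact h1.trans h2
  -- Step 3: combine
  have key3 : ∑ i, (∑ j ∈ c', u i j) / (1 + d i) ≤ (n : ℝ) := by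
    have hsw : ∑ j ∈ c', ∑ i, (u i j / (1 + d i) - u i (π j) / (d i - u i (π j))) ≤ 0 :=
      Finset.sum_nonpos fun j hj => key1 j hj
    rw [Finset.sum_comm] at hsw
    have hre : ∀ i : Fin n, ∑ j ∈ c', (u i j / (1 + d i) - u i (π j) / (d i - u i (π j)))
        = (∑ j ∈ c', u i j) / (1 + d i) - ∑ j ∈ c', u i (π j) / (d i - u i (π j)) := by
      intro i
      rw [Finset.sum_sub_distrib, Finset.sum_div]
    rw [Finset.sum_congr rfl fun i _ => hre i, Finset.sum_sub_distrib] at hsw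
    have h2 : ∑ i : Fin n, ∑ j ∈ c', u i (π j) / (d i - u i (π j)) ≤ ∑ _i : Fin n, (1:ℝ) :=
      Finset.sum_le_sum fun i _ => key2 i
    simp only [Finset.sum_const, Finset.card_univ, Fintype.card_fin, nsmul_eq_mul,
      mul_one] at h2
    linarith
  -- lower bound from the blocking coalition
  have hn : (0:ℝ) < n := by exact_mod_cast i0.pos
  have hS : (0:ℝ) < S.card := by exact_mod_cast Finset.card_pos.2 ⟨i0, hi0S⟩
  have hlow : ∀ i ∈ S, (n:ℝ) / S.card ≤ (∑ j ∈ c', u i j) / (1 + d i) := by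
    intro i hiS
    have hgei := hge i hiS
    rw [ge_iff_le] at hgei
    rw [hdi i, div_le_div_iff₀ hS (by linarith [hd1 i, hdi i] : (0:ℝ) < 1 + (1 + ∑ j ∈ cstar, u i j))]
    have hmul := mul_le_mul_of_nonneg_left hgei (le_of_lt hn)
    have heq : (n:ℝ) * (((S.card : ℝ)/n) * (∑ j ∈ c', u i j))
        = (∑ j ∈ c', u i j) * S.card := by field_simp
    rw [heq] at hmul
    linarith
  have hlow0 : (n:ℝ) / S.card < (∑ j ∈ c', u i0 j) / (1 + d i0) := by
    rw [gt_iff_lt] at hstrict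
    rw [hdi i0, div_lt_div_iff₀ hS (by linarith [hd1 i0, hdi i0] : (0:ℝ) < 1 + (1 + ∑ j ∈ cstar, u i0 j))]
    have hmul := mul_lt_mul_of_pos_left hstrict hn
    have heq : (n:ℝ) * (((S.card : ℝ)/n) * (∑ j ∈ c', u i0 j))
        = (∑ j ∈ c', u i0 j) * S.card := by field_simp
    rw [heq] at hmul
    linarith
  have hsumS : (n:ℝ) < ∑ i ∈ S, (∑ j ∈ c', u i j) / (1 + d i) := by
    have h := Finset.sum_lt_sum hlow ⟨i0, hi0S, hlow0⟩
    have hc : ∑ _i ∈ S, (n:ℝ) / S.card = n := by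
      rw [Finset.sum_const, nsmul_eq_mul]
      field_simp
    linarith
  have hfull : ∑ i ∈ S, (∑ j ∈ c', u i j) / (1 + d i)
      ≤ ∑ i : Fin n, (∑ j ∈ c', u i j) / (1 + d i) := by
    refine Finset.sum_le_sum_of_subset_of_nonneg (Finset.subset_univ S) fun i _ _ => ?_
    exact div_nonneg (Finset.sum_nonneg fun j _ => (hu i j).1) (by linarith [hd1 i])
  linarith
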